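/- arXiv:2406.18450 — 2 statements merged into one kernel-verified Lean document; each statement's English description precedes it below -/
import Mathlib

section
/- (Telescoping/simulation lemma) Consider a finite-horizon MDP with horizon H, state space S, action space A, two transition kernels T and T̂ from S×A to probability distributions on S, a fixed policy π, and a per-step reward R with trajectory return R(τ) = Σ_t R(s_t, a_t) bounded so that 0 ≤ R(τ) ≤ R_max for every trajectory, with per-state value functions bounded by R_max. Then V^π_{T,R} − V^π_{T̂,R} ≤ E_{τ ∼ d^π_{T̂}} [ Σ_{(s_j,a_j) ∈ τ} ‖T(·|s_j,a_j) − T̂(·|s_j,a_j)‖₁ ] · R_max, where V^π_{T,R} is the expected return of π under kernel T and d^π_{T̂} is the trajectory distribution of π under T̂. -/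
open Finset

variable {S A : Type*}

/-- Probability of a length-`H` trajectory (sequence of state-action pairs) under
policy `π`, transition kernel `T`, starting from initial state `s₀`. -/
noncomputable def trajProb [Fintype S] [Fintype A] [DecidableEq S]
    (H : ℕ) (hH : 0 < H) (s₀ : S) (T : S → A → S → ℝ) (π : S → A → ℝ)
    (τ : Fin H → S × A) : ℝ :=
  (if (τ ⟨0, hH⟩).1 = s₀ then (1 : ℝ) else 0) *
    (∏ j, π (τ j).1 (τ j).2) *
    ∏ j : Fin (H - 1),
      T (τ (j.castLE (Nat.sub_le H 1))).1 (τ (j.castLE (Nat.sub_le H 1))).2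
        (τ ⟨j.val + 1, by have := j.isLt; omega⟩).1

/-- Trajectory return: sum of per-step rewards. -/
def trajReward (H : ℕ) (R : S → A → ℝ) (τ : Fin H → S × A) : ℝ :=
  ∑ j, R (τ j).1 (τ j).2

/-- L1 (total-variation style) distance between two kernels at `(s, a)`. -/
def tvDist [Fintype S] (T T' : S → A → S → ℝ) (s : S) (a : A) : ℝ :=
  ∑ s', |T s a s' - T' s a s'|

/-- Expected return of policy `π` under kernel `T` and reward `R`. -/
noncomputable def value [Fintype S] [Fintype A] [DecidableEq S] [DecidableEq A]
    (H : ℕ) (hH : 0 < H) (s₀ : S) (T : S → A → S → ℝ) (π : S → A → ℝ)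
    (R : S → A → ℝ) : ℝ :=
  ∑ τ : Fin H → S × A, trajProb H hH s₀ T π τ * trajReward H R τ

lemma sum_append_split {X : Type*} [Fintype X] (p q : ℕ) (F : (Fin (p+q) → X) → ℝ) :
    ∑ τ : Fin (p+q) → X, F τ = ∑ a : Fin p → X, ∑ b : Fin q → X, F (Fin.append a b) := by
  have h := Equiv.sum_comp (Fin.appendEquiv p q) F
  rw [Fintype.sum_prod_type] at h
  exact h.symm

lemma sum_cons_split {X : Type*} [Fintype X] (n : ℕ) (F : (Fin (n+1) → X) → ℝ) :
    ∑ b : Fin (n+1) → X, F b = ∑ x : X, ∑ b : Fin n → X, F (Fin.cons x b) := by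
  have h := Equiv.sum_comp (Fin.consEquiv (fun _ => X)) F
  rw [Fintype.sum_prod_type] at h
  exact h.symm

lemma append_eval_nat {X : Type*} {p q : ℕ} (a : Fin p → X) (b : Fin q → X) (v : ℕ)
    (h2 : v < p + q) :
    Fin.append a b ⟨v, h2⟩ = if h : v < p then a ⟨v, h⟩ else b ⟨v - p, by omega⟩ := by
  by_cases h : v < p
  · rw [dif_pos h]
    have e : (⟨v, h2⟩ : Fin (p+q)) = Fin.castAdd q ⟨v, h⟩ := rfl
    rw [e, Fin.append_left]
  · rw [dif_neg h]
    have e : (⟨v, h2⟩ : Fin (p+q)) = Fin.natAdd p ⟨v - p, by omega⟩ := by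
      apply Fin.ext; simp; omega
    rw [e, Fin.append_right]

def stepF (H : ℕ) (K : S → A → S → ℝ) (i : ℕ) (τ : Fin H → S × A) : ℝ :=
  if h : i + 1 < H then K (τ ⟨i, by omega⟩).1 (τ ⟨i, by omega⟩).2 (τ ⟨i+1, h⟩).1 else 1

lemma cons_mk_succ {X : Type*} {n : ℕ} (x : X) (b : Fin n → X) (t : ℕ) (h : t + 1 < n + 1) :
    (Fin.cons x b : Fin (n+1) → X) ⟨t+1, h⟩ = b ⟨t, by omega⟩ := by
  have e : (⟨t+1, h⟩ : Fin (n+1)) = Fin.succ ⟨t, by omega⟩ := rfl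
  rw [e, Fin.cons_succ]

lemma stepF_cons (q : ℕ) (K : S → A → S → ℝ) (x : S × A) (b : Fin (q+1) → S × A) (t : ℕ) :
    stepF (q+2) K (t+1) (Fin.cons x b) = stepF (q+1) K t b := by
  unfold stepF
  by_cases hlt : t + 1 < q + 1
  · rw [dif_pos (by omega), dif_pos hlt, cons_mk_succ, cons_mk_succ]
  · rw [dif_neg (by omega), dif_neg hlt]

lemma stepF_cons_zero (q : ℕ) (K : S → A → S → ℝ) (x : S × A) (b : Fin (q+1) → S × A) :
    stepF (q+2) K 0 (Fin.cons x b) = K x.1 x.2 (b 0).1 := by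
  unfold stepF
  rw [dif_pos (by omega)]
  rw [show ((⟨0, by omega⟩ : Fin (q+2))) = 0 from rfl, Fin.cons_zero,
    cons_mk_succ x b 0 (by omega)]
  rfl

lemma sum_prod_fst [Fintype S] [Fintype A] (π : S → A → ℝ) (hπ : ∀ s, ∑ a, π s a = 1)
    (h : S → ℝ) : ∑ x : S × A, h x.1 * π x.1 x.2 = ∑ s, h s := by
  rw [Fintype.sum_prod_type]
  refine sum_congr rfl fun s _ => ?_
  show ∑ y : A, h s * π s y = h s
  rw [← mul_sum, hπ s, mul_one]

lemma chain_sum [Fintype S] [Fintype A] (T : S → A → S → ℝ) (π : S → A → ℝ)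
    (hT : ∀ s a, ∑ s', T s a s' = 1) (hπ : ∀ s, ∑ a, π s a = 1) :
    ∀ (q : ℕ) (h : S → ℝ),
    ∑ b : Fin (q+1) → S × A,
      (h (b 0).1 * ∏ t, π (b t).1 (b t).2) * ∏ t ∈ range q, stepF (q+1) T t b
      = ∑ s, h s := by
  intro q
  induction q with
  | zero =>
    intro h
    rw [sum_cons_split]
    rw [← sum_prod_fst π hπ h]
    refine sum_congr rfl fun x _ => ?_
    simp
  | succ q ih =>
    intro h
    rw [sum_cons_split]
    rw [← sum_prod_fst π hπ h]
    refine sum_congr rfl fun x _ => ?_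
    calc ∑ b : Fin (q+1) → S × A,
          (h ((Fin.cons x b : Fin (q+2) → S × A) 0).1 *
            ∏ t, π ((Fin.cons x b : Fin (q+2) → S × A) t).1 ((Fin.cons x b : Fin (q+2) → S × A) t).2) *
            ∏ t ∈ range (q+1), stepF (q+2) T t (Fin.cons x b)
        = (h x.1 * π x.1 x.2) *
            ∑ b : Fin (q+1) → S × A,
              (T x.1 x.2 (b 0).1 * ∏ t, π (b t).1 (b t).2) *
                ∏ t ∈ range q, stepF (q+1) T t b := by
          rw [mul_sum]
          refine sum_congr rfl fun b _ => ?_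
          rw [Fin.prod_univ_succ, prod_range_succ', stepF_cons_zero]
          simp only [Fin.cons_succ, Fin.cons_zero, stepF_cons]
          ring
      _ = h x.1 * π x.1 x.2 := by rw [ih (fun s' => T x.1 x.2 s'), hT, mul_one]

noncomputable def wgt [DecidableEq S] [Fintype S] [Fintype A] (H : ℕ) (hH : 0 < H) (s₀ : S)
    (π : S → A → ℝ) (τ : Fin H → S × A) : ℝ :=
  (if (τ ⟨0, hH⟩).1 = s₀ then (1 : ℝ) else 0) * ∏ j, π (τ j).1 (τ j).2

lemma trajProb_eq [Fintype S] [Fintype A] [DecidableEq S] (H : ℕ) (hH : 0 < H) (s₀ : S)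
    (K : S → A → S → ℝ) (π : S → A → ℝ) (τ : Fin H → S × A) :
    trajProb H hH s₀ K π τ = wgt H hH s₀ π τ * ∏ i ∈ range (H-1), stepF H K i τ := by
  unfold trajProb wgt
  rw [← Fin.prod_univ_eq_prod_range (fun i => stepF H K i τ) (H-1)]
  congr 1
  refine prod_congr rfl fun j _ => ?_
  show _ = stepF H K j.val τ
  unfold stepF
  rw [dif_pos (show (j:ℕ) + 1 < H by omega)]
  rfl

lemma stepF_append_lt {p q : ℕ} (K : S → A → S → ℝ) (a : Fin p → S × A) (b : Fin q → S × A)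
    (j : ℕ) (hj : j + 1 < p) :
    stepF (p+q) K j (Fin.append a b) = stepF p K j a := by
  unfold stepF
  rw [dif_pos (by omega), dif_pos hj, append_eval_nat, append_eval_nat,
    dif_pos (show j < p by omega), dif_pos (show j + 1 < p from hj)]

lemma stepF_append_bridge {k q : ℕ} (K : S → A → S → ℝ) (a : Fin (k+1) → S × A)
    (b : Fin (q+1) → S × A) :
    stepF (k+1+(q+1)) K k (Fin.append a b) =
      K (a ⟨k, by omega⟩).1 (a ⟨k, by omega⟩).2 (b 0).1 := by
  unfold stepF
  rw [dif_pos (by omega), append_eval_nat, append_eval_nat,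
    dif_pos (show k < k + 1 by omega), dif_neg (show ¬ (k+1 < k+1) by omega)]
  have e : (⟨k+1-(k+1), by omega⟩ : Fin (q+1)) = 0 := by
    apply Fin.ext; simp
  rw [e]

lemma stepF_append_tail {p q : ℕ} (K : S → A → S → ℝ) (a : Fin p → S × A)
    (b : Fin (q+1) → S × A) (t : ℕ) :
    stepF (p+(q+1)) K (p+t) (Fin.append a b) = stepF (q+1) K t b := by
  unfold stepF
  by_cases hlt : t + 1 < q + 1
  · rw [dif_pos (by omega), dif_pos hlt, append_eval_nat, append_eval_nat,
      dif_neg (show ¬ (p + t < p) by omega), dif_neg (show ¬ (p + t + 1 < p) by omega)]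
    have e1 : (⟨p+t-p, by omega⟩ : Fin (q+1)) = ⟨t, by omega⟩ := by
      apply Fin.ext; simp
    have e2 : (⟨p+t+1-p, by omega⟩ : Fin (q+1)) = ⟨t+1, hlt⟩ := by
      apply Fin.ext; simp; omega
    rw [e1, e2]
  · rw [dif_neg (by omega), dif_neg hlt]

lemma wgt_append [Fintype S] [Fintype A] [DecidableEq S] {k q : ℕ} (hH : 0 < k+1+(q+1))
    (s₀ : S) (π : S → A → ℝ) (a : Fin (k+1) → S × A) (b : Fin (q+1) → S × A) :
    wgt (k+1+(q+1)) hH s₀ π (Fin.append a b) =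
      ((if (a 0).1 = s₀ then (1 : ℝ) else 0) * ∏ j, π (a j).1 (a j).2) *
        ∏ j, π (b j).1 (b j).2 := by
  unfold wgt
  rw [Fin.prod_univ_add]
  simp only [Fin.append_left, Fin.append_right]
  rw [append_eval_nat, dif_pos (show 0 < k + 1 by omega)]
  have e : (⟨0, by omega⟩ : Fin (k+1)) = 0 := by apply Fin.ext; simp
  rw [e, mul_assoc]

noncomputable def tvN [Fintype S] (H : ℕ) (T That : S → A → S → ℝ) (i : ℕ)
    (τ : Fin H → S × A) : ℝ :=
  if h : i < H then tvDist T That (τ ⟨i, h⟩).1 (τ ⟨i, h⟩).2 else 0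

lemma step2 [Fintype S] [Fintype A] [DecidableEq S] [DecidableEq A]
    (H k : ℕ) (hk : k + 1 < H) (hH : 0 < H) (s₀ : S) (T That : S → A → S → ℝ)
    (π : S → A → ℝ)
    (hT : ∀ s a, ∑ s', T s a s' = 1) (hThat : ∀ s a, ∑ s', That s a s' = 1)
    (hπ : ∀ s, ∑ a, π s a = 1) :
    ∑ τ : Fin H → S × A,
      wgt H hH s₀ π τ * (∏ j ∈ range k, stepF H That j τ) *
        |stepF H T k τ - stepF H That k τ| * ∏ j ∈ Ico (k+1) (H-1), stepF H T j τ
      = ∑ τ : Fin H → S × A, trajProb H hH s₀ That π τ * tvN H T That k τ := by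
  have hkH : k < H := by omega
  have htvN : tvN H T That k = fun τ : Fin H → S × A =>
      tvDist T That (τ ⟨k, hkH⟩).1 (τ ⟨k, hkH⟩).2 := funext fun τ => dif_pos hkH
  simp only [htvN]
  obtain ⟨q, rfl⟩ : ∃ q, H = k + 1 + (q + 1) := ⟨H - k - 2, by omega⟩
  have hH1 : k + 1 + (q + 1) - 1 = k + 1 + q := by omega
  simp only [trajProb_eq, hH1]
  rw [sum_append_split (k+1) (q+1), sum_append_split (k+1) (q+1)]
  refine sum_congr rfl fun a _ => ?_
  set s1 : S := (a ⟨k, by omega⟩).1 with hs1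
  set a1 : A := (a ⟨k, by omega⟩).2 with ha1
  set C : ℝ := (if (a 0).1 = s₀ then (1:ℝ) else 0) * (∏ j, π (a j).1 (a j).2) *
      ∏ j ∈ range k, stepF (k+1) That j a with hC
  have hpre : ∀ b : Fin (q+1) → S × A,
      ∏ j ∈ range k, stepF (k+1+(q+1)) That j (Fin.append a b)
        = ∏ j ∈ range k, stepF (k+1) That j a := by
    intro b
    refine prod_congr rfl fun j hj => ?_
    rw [mem_range] at hj
    exact stepF_append_lt That a b j (by omega)
  have htail : ∀ (K : S → A → S → ℝ) (b : Fin (q+1) → S × A),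
      ∏ j ∈ Ico (k+1) (k+1+q), stepF (k+1+(q+1)) K j (Fin.append a b)
        = ∏ t ∈ range q, stepF (q+1) K t b := by
    intro K b
    rw [prod_Ico_eq_prod_range]
    have : k + 1 + q - (k + 1) = q := by omega
    rw [this]
    exact prod_congr rfl fun t _ => stepF_append_tail K a b t
  have hsplit : ∀ (K : S → A → S → ℝ) (b : Fin (q+1) → S × A),
      ∏ i ∈ range (k+1+q), stepF (k+1+(q+1)) K i (Fin.append a b)
        = (∏ j ∈ range k, stepF (k+1+(q+1)) K j (Fin.append a b)) *
            stepF (k+1+(q+1)) K k (Fin.append a b) *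
            ∏ j ∈ Ico (k+1) (k+1+q), stepF (k+1+(q+1)) K j (Fin.append a b) := by
    intro K b
    rw [range_eq_Ico, ← prod_Ico_consecutive _ (Nat.zero_le (k+1)) (by omega : k+1 ≤ k+1+q),
      ← range_eq_Ico, prod_range_succ]
  have hprehat : ∀ b : Fin (q+1) → S × A,
      ∏ j ∈ range k, stepF (k+1+(q+1)) That j (Fin.append a b)
        = ∏ j ∈ range k, stepF (k+1) That j a := hpre
  have htv : ∀ b : Fin (q+1) → S × A, ∀ (pf : k < k + 1 + (q+1)),
      Fin.append a b ⟨k, pf⟩ = a ⟨k, by omega⟩ := by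
    intro b pf
    rw [append_eval_nat, dif_pos (show k < k + 1 by omega)]
  calc ∑ b : Fin (q+1) → S × A,
        wgt (k+1+(q+1)) (by omega) s₀ π (Fin.append a b) *
          (∏ j ∈ range k, stepF (k+1+(q+1)) That j (Fin.append a b)) *
          |stepF (k+1+(q+1)) T k (Fin.append a b) -
            stepF (k+1+(q+1)) That k (Fin.append a b)| *
          ∏ j ∈ Ico (k+1) (k+1+q), stepF (k+1+(q+1)) T j (Fin.append a b)
      = C * ∑ b : Fin (q+1) → S × A,
          ((fun s => |T s1 a1 s - That s1 a1 s|) (b 0).1 * ∏ t, π (b t).1 (b t).2) *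
            ∏ t ∈ range q, stepF (q+1) T t b := by
        rw [mul_sum]
        refine sum_congr rfl fun b _ => ?_
        rw [wgt_append, hpre b, htail T b, stepF_append_bridge T a b,
          stepF_append_bridge That a b, hC]
        ring
    _ = C * tvDist T That s1 a1 := by
        rw [chain_sum T π hT hπ q (fun s => |T s1 a1 s - That s1 a1 s|)]
        rfl
    _ = ∑ b : Fin (q+1) → S × A,
        (wgt (k+1+(q+1)) (by omega) s₀ π (Fin.append a b) *
          ∏ i ∈ range (k+1+q), stepF (k+1+(q+1)) That i (Fin.append a b)) *
          tvDist T That (Fin.append a b ⟨k, by omega⟩).1 (Fin.append a b ⟨k, by omega⟩).2 := by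
        rw [eq_comm]
        calc ∑ b : Fin (q+1) → S × A,
            (wgt (k+1+(q+1)) (by omega) s₀ π (Fin.append a b) *
              ∏ i ∈ range (k+1+q), stepF (k+1+(q+1)) That i (Fin.append a b)) *
              tvDist T That (Fin.append a b ⟨k, by omega⟩).1 (Fin.append a b ⟨k, by omega⟩).2
            = (C * tvDist T That s1 a1) * ∑ b : Fin (q+1) → S × A,
                ((fun s => That s1 a1 s) (b 0).1 * ∏ t, π (b t).1 (b t).2) *
                  ∏ t ∈ range q, stepF (q+1) That t b := by
              rw [mul_sum]
              refine sum_congr rfl fun b _ => ?_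
              rw [wgt_append, hsplit That b, hpre b, htail That b,
                stepF_append_bridge That a b, htv b, hC]
              ring
          _ = C * tvDist T That s1 a1 := by
              rw [chain_sum That π hThat hπ q (fun s => That s1 a1 s), hThat, mul_one]

lemma tele_prod (f g : ℕ → ℝ) (n : ℕ) :
    ∏ i ∈ range n, f i - ∏ i ∈ range n, g i =
      ∑ k ∈ range n, (∏ j ∈ range k, g j) * (f k - g k) * ∏ j ∈ Ico (k+1) n, f j := by
  induction n with
  | zero => simp
  | succ n ih =>
    rw [prod_range_succ, prod_range_succ, sum_range_succ]
    have h1 : ∀ k ∈ range n, (∏ j ∈ range k, g j) * (f k - g k) * ∏ j ∈ Ico (k+1) (n+1), f j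
        = ((∏ j ∈ range k, g j) * (f k - g k) * ∏ j ∈ Ico (k+1) n, f j) * f n := by
      intro k hk
      rw [mem_range] at hk
      rw [prod_Ico_succ_top (by omega), ← mul_assoc]
    rw [sum_congr rfl h1, ← sum_mul, ← ih, Ico_self, prod_empty]
    ring

lemma stepF_nonneg (H : ℕ) (K : S → A → S → ℝ) (hK : ∀ s a s', 0 ≤ K s a s') (i : ℕ)
    (τ : Fin H → S × A) : 0 ≤ stepF H K i τ := by
  unfold stepF
  by_cases h : i + 1 < H
  · rw [dif_pos h]; exact hK _ _ _
  · rw [dif_neg h]; norm_num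

lemma wgt_nonneg [Fintype S] [Fintype A] [DecidableEq S] (H : ℕ) (hH : 0 < H) (s₀ : S)
    (π : S → A → ℝ) (hπn : ∀ s a, 0 ≤ π s a) (τ : Fin H → S × A) :
    0 ≤ wgt H hH s₀ π τ := by
  refine mul_nonneg ?_ (prod_nonneg fun j _ => hπn _ _)
  split <;> norm_num

lemma trajProb_nonneg [Fintype S] [Fintype A] [DecidableEq S] (H : ℕ) (hH : 0 < H) (s₀ : S)
    (K : S → A → S → ℝ) (hK : ∀ s a s', 0 ≤ K s a s') (π : S → A → ℝ)
    (hπn : ∀ s a, 0 ≤ π s a) (τ : Fin H → S × A) :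
    0 ≤ trajProb H hH s₀ K π τ := by
  rw [trajProb_eq]
  exact mul_nonneg (wgt_nonneg H hH s₀ π hπn τ)
    (prod_nonneg fun i _ => stepF_nonneg H K hK i τ)

lemma tvN_nonneg [Fintype S] (H : ℕ) (T That : S → A → S → ℝ) (i : ℕ) (τ : Fin H → S × A) :
    0 ≤ tvN H T That i τ := by
  unfold tvN
  split
  · exact sum_nonneg fun s _ => abs_nonneg _
  · exact le_refl 0

/-- Telescoping / simulation lemma. -/
theorem telescoping_lemma [Fintype S] [Fintype A] [DecidableEq S] [DecidableEq A]
    (H : ℕ) (hH : 0 < H) (s₀ : S) (T That : S → A → S → ℝ) (π : S → A → ℝ)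
    (R : S → A → ℝ) (Rmax : ℝ) (hRmax : 0 ≤ Rmax)
    (hT : ∀ s a, (∀ s', 0 ≤ T s a s') ∧ ∑ s', T s a s' = 1)
    (hThat : ∀ s a, (∀ s', 0 ≤ That s a s') ∧ ∑ s', That s a s' = 1)
    (hπ : ∀ s, (∀ a, 0 ≤ π s a) ∧ ∑ a, π s a = 1)
    (hRnonneg : ∀ s a, 0 ≤ R s a)
    (hR : ∀ τ : Fin H → S × A, trajReward H R τ ∈ Set.Icc 0 Rmax) :
    value H hH s₀ T π R - value H hH s₀ That π R ≤
      (∑ τ : Fin H → S × A, trajProb H hH s₀ That π τ *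
        ∑ j, tvDist T That (τ j).1 (τ j).2) * Rmax := by
  have hTn : ∀ s a s', 0 ≤ T s a s' := fun s a => (hT s a).1
  have hThatn : ∀ s a s', 0 ≤ That s a s' := fun s a => (hThat s a).1
  have hT1 : ∀ s a, ∑ s', T s a s' = 1 := fun s a => (hT s a).2
  have hThat1 : ∀ s a, ∑ s', That s a s' = 1 := fun s a => (hThat s a).2
  have hπn : ∀ s a, 0 ≤ π s a := fun s => (hπ s).1
  have hπ1 : ∀ s, ∑ a, π s a = 1 := fun s => (hπ s).2
  calc value H hH s₀ T π R - value H hH s₀ That π R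
      = ∑ τ : Fin H → S × A, ∑ k ∈ range (H-1),
          (wgt H hH s₀ π τ * (∏ j ∈ range k, stepF H That j τ) *
            (stepF H T k τ - stepF H That k τ) *
            ∏ j ∈ Ico (k+1) (H-1), stepF H T j τ) * trajReward H R τ := by
        unfold value
        rw [← sum_sub_distrib]
        refine sum_congr rfl fun τ _ => ?_
        rw [trajProb_eq, trajProb_eq, ← sub_mul, ← mul_sub,
          tele_prod (fun i => stepF H T i τ) (fun i => stepF H That i τ) (H-1),
          mul_sum, sum_mul]
        exact sum_congr rfl fun k _ => by ring
    _ ≤ ∑ τ : Fin H → S × A, ∑ k ∈ range (H-1),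
          (wgt H hH s₀ π τ * (∏ j ∈ range k, stepF H That j τ) *
            |stepF H T k τ - stepF H That k τ| *
            ∏ j ∈ Ico (k+1) (H-1), stepF H T j τ) * Rmax := by
        refine sum_le_sum fun τ _ => sum_le_sum fun k _ => ?_
        set t : ℝ := wgt H hH s₀ π τ * (∏ j ∈ range k, stepF H That j τ) *
            (stepF H T k τ - stepF H That k τ) *
            ∏ j ∈ Ico (k+1) (H-1), stepF H T j τ with ht
        have habs : |t| = wgt H hH s₀ π τ * (∏ j ∈ range k, stepF H That j τ) *
            |stepF H T k τ - stepF H That k τ| *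
            ∏ j ∈ Ico (k+1) (H-1), stepF H T j τ := by
          rw [ht, abs_mul, abs_mul, abs_mul,
            abs_of_nonneg (wgt_nonneg H hH s₀ π hπn τ),
            abs_of_nonneg (prod_nonneg fun j _ => stepF_nonneg H That hThatn j τ),
            abs_of_nonneg (prod_nonneg fun j _ => stepF_nonneg H T hTn j τ)]
        rw [← habs]
        calc t * trajReward H R τ ≤ |t| * trajReward H R τ :=
              mul_le_mul_of_nonneg_right (le_abs_self t) (hR τ).1
          _ ≤ |t| * Rmax := mul_le_mul_of_nonneg_left (hR τ).2 (abs_nonneg t)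
    _ = ∑ k ∈ range (H-1), (∑ τ : Fin H → S × A,
          trajProb H hH s₀ That π τ * tvN H T That k τ) * Rmax := by
        rw [sum_comm]
        refine sum_congr rfl fun k hk => ?_
        rw [mem_range] at hk
        rw [← sum_mul, step2 H k (by omega) hH s₀ T That π hT1 hThat1 hπ1]
    _ ≤ ∑ k ∈ range H, (∑ τ : Fin H → S × A,
          trajProb H hH s₀ That π τ * tvN H T That k τ) * Rmax := by
        refine sum_le_sum_of_subset_of_nonneg (range_subset_range.2 (by omega)) ?_
        intro k _ _
        refine mul_nonneg (sum_nonneg fun τ _ => mul_nonneg ?_ (tvN_nonneg _ _ _ _ _)) hRmax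
        exact trajProb_nonneg H hH s₀ That hThatn π hπn τ
    _ = (∑ τ : Fin H → S × A, trajProb H hH s₀ That π τ *
          ∑ j, tvDist T That (τ j).1 (τ j).2) * Rmax := by
        rw [← sum_mul]
        congr 1
        rw [sum_comm]
        refine sum_congr rfl fun τ _ => ?_
        rw [← mul_sum]
        congr 1
        rw [← Fin.sum_univ_eq_sum_range (fun i => tvN H T That i τ) H]
        exact sum_congr rfl fun j _ => dif_pos j.isLt
end

section
/- (Value gap expressed via preference gap) Let d₁ and d₂ be trajectory distributions and let R, R̂ be trajectory reward functions with values in [0, R_max]. Let σ be the sigmoid and κ = sup_{r∈[−R_max,R_max]} 1/σ'(r). Then E_{τ₁∼d₁, τ₂∼d₂}[(R(τ₁) − R(τ₂)) − (R̂(τ₁) − R̂(τ₂))] ≤ κ · E_{τ₁∼d₁, τ₂∼d₂}[ |σ(R(τ₁)−R(τ₂)) − σ(R̂(τ₁)−R̂(τ₂))| ]. -/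
noncomputable def sigmoid (x : ℝ) : ℝ := 1 / (1 + Real.exp (-x))



lemma sigmoid_hasDerivAt (x : ℝ) :
    HasDerivAt sigmoid (Real.exp (-x) / (1 + Real.exp (-x))^2) x := by
  have h0 : (0:ℝ) < 1 + Real.exp (-x) := by positivity
  have h1 : HasDerivAt (fun y : ℝ => 1 + Real.exp (-y)) (-Real.exp (-x)) x := by
    simpa using (Real.hasDerivAt_exp (-x)).comp x ((hasDerivAt_id x).neg) |>.const_add 1
  have := h1.inv (ne_of_gt h0)
  have hfun : sigmoid = fun y : ℝ => (1 + Real.exp (-y))⁻¹ := by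
    funext y; simp [sigmoid, one_div]
  rw [hfun]
  simp at this; exact this

lemma deriv_sigmoid (x : ℝ) :
    deriv sigmoid x = Real.exp (-x) / (1 + Real.exp (-x))^2 :=
  (sigmoid_hasDerivAt x).deriv

lemma deriv_sigmoid_pos (x : ℝ) : 0 < deriv sigmoid x := by
  rw [deriv_sigmoid]; positivity

lemma key_bound {Rmax κ : ℝ}
    (hκ : IsLUB ((fun r => 1 / deriv sigmoid r) '' Set.Icc (-Rmax) Rmax) κ)
    {a b : ℝ} (ha : a ∈ Set.Icc (-Rmax) Rmax) (hb : b ∈ Set.Icc (-Rmax) Rmax) :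
    a - b ≤ κ * |sigmoid a - sigmoid b| := by
  have hκ0 : 0 ≤ κ := by
    have hmem : 1 / deriv sigmoid a ∈ (fun r => 1 / deriv sigmoid r) '' Set.Icc (-Rmax) Rmax :=
      ⟨a, ha, rfl⟩
    have := hκ.1 hmem
    have hpos : 0 < 1 / deriv sigmoid a := one_div_pos.2 (deriv_sigmoid_pos a)
    linarith [deriv_sigmoid_pos a]
  -- suffices to treat b < a
  rcases le_or_gt a b with h | h
  · have : a - b ≤ 0 := by linarith
    exact this.trans (mul_nonneg hκ0 (abs_nonneg _))
  · obtain ⟨c, hc, hc'⟩ := exists_hasDerivAt_eq_slope sigmoid (deriv sigmoid) h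
      (Continuous.continuousOn
        (continuous_iff_continuousAt.2 fun y => (sigmoid_hasDerivAt y).continuousAt))
      (fun y _ => (sigmoid_hasDerivAt y).congr_deriv (deriv_sigmoid y).symm)
    have hcI : c ∈ Set.Icc (-Rmax) Rmax :=
      ⟨le_trans hb.1 (le_of_lt hc.1), le_trans (le_of_lt hc.2) ha.2⟩
    have hderivpos := deriv_sigmoid_pos c
    have hκc : 1 / deriv sigmoid c ≤ κ := hκ.1 ⟨c, hcI, rfl⟩
    have hab : (0:ℝ) < a - b := by linarith
    have hdiff : sigmoid a - sigmoid b = deriv sigmoid c * (a - b) := by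
      rw [hc']; field_simp
    have hpos2 : 0 ≤ sigmoid a - sigmoid b := by
      rw [hdiff]; exact mul_nonneg hderivpos.le hab.le
    rw [abs_of_nonneg hpos2, hdiff]
    have h1 : a - b = (1 / deriv sigmoid c) * (deriv sigmoid c * (a - b)) := by
      field_simp
    calc a - b = (1 / deriv sigmoid c) * (deriv sigmoid c * (a - b)) := h1
      _ ≤ κ * (deriv sigmoid c * (a - b)) :=
          mul_le_mul_of_nonneg_right hκc (mul_nonneg hderivpos.le hab.le)

/-- Value gap expressed via preference gap, through the mean-value constant κ. -/
theorem value_gap_via_preference_gap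
    {Traj : Type*} [Fintype Traj]
    (d₁ d₂ : Traj → ℝ) (R Rhat : Traj → ℝ) (Rmax κ : ℝ) (hRmax : 0 < Rmax)
    (hd₁ : (∀ τ, 0 ≤ d₁ τ) ∧ ∑ τ, d₁ τ = 1)
    (hd₂ : (∀ τ, 0 ≤ d₂ τ) ∧ ∑ τ, d₂ τ = 1)
    (hR : ∀ τ, R τ ∈ Set.Icc 0 Rmax) (hRhat : ∀ τ, Rhat τ ∈ Set.Icc 0 Rmax)
    (hκ : IsLUB ((fun r => 1 / deriv sigmoid r) '' Set.Icc (-Rmax) Rmax) κ) :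
    (∑ τ₁, ∑ τ₂, d₁ τ₁ * d₂ τ₂ *
        ((R τ₁ - R τ₂) - (Rhat τ₁ - Rhat τ₂))) ≤
      κ * ∑ τ₁, ∑ τ₂, d₁ τ₁ * d₂ τ₂ *
        |sigmoid (R τ₁ - R τ₂) - sigmoid (Rhat τ₁ - Rhat τ₂)| := by
  have hmem : ∀ τ₁ τ₂, R τ₁ - R τ₂ ∈ Set.Icc (-Rmax) Rmax := fun τ₁ τ₂ =>
    ⟨by linarith [(hR τ₁).1, (hR τ₂).2], by linarith [(hR τ₁).2, (hR τ₂).1]⟩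
  have hmem' : ∀ τ₁ τ₂, Rhat τ₁ - Rhat τ₂ ∈ Set.Icc (-Rmax) Rmax := fun τ₁ τ₂ =>
    ⟨by linarith [(hRhat τ₁).1, (hRhat τ₂).2], by linarith [(hRhat τ₁).2, (hRhat τ₂).1]⟩
  have key : ∀ τ₁ τ₂,
      d₁ τ₁ * d₂ τ₂ * ((R τ₁ - R τ₂) - (Rhat τ₁ - Rhat τ₂)) ≤
        κ * (d₁ τ₁ * d₂ τ₂ * |sigmoid (R τ₁ - R τ₂) - sigmoid (Rhat τ₁ - Rhat τ₂)|) := by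
    intro τ₁ τ₂
    have hw : 0 ≤ d₁ τ₁ * d₂ τ₂ := mul_nonneg (hd₁.1 τ₁) (hd₂.1 τ₂)
    have hk := key_bound hκ (hmem τ₁ τ₂) (hmem' τ₁ τ₂)
    calc d₁ τ₁ * d₂ τ₂ * ((R τ₁ - R τ₂) - (Rhat τ₁ - Rhat τ₂))
        ≤ d₁ τ₁ * d₂ τ₂ * (κ * |sigmoid (R τ₁ - R τ₂) - sigmoid (Rhat τ₁ - Rhat τ₂)|) :=
          mul_le_mul_of_nonneg_left hk hw
      _ = κ * (d₁ τ₁ * d₂ τ₂ * |sigmoid (R τ₁ - R τ₂) - sigmoid (Rhat τ₁ - Rhat τ₂)|) := by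
          ring
  calc (∑ τ₁, ∑ τ₂, d₁ τ₁ * d₂ τ₂ * ((R τ₁ - R τ₂) - (Rhat τ₁ - Rhat τ₂)))
      ≤ ∑ τ₁, ∑ τ₂, κ * (d₁ τ₁ * d₂ τ₂ *
          |sigmoid (R τ₁ - R τ₂) - sigmoid (Rhat τ₁ - Rhat τ₂)|) :=
        Finset.sum_le_sum fun τ₁ _ => Finset.sum_le_sum fun τ₂ _ => key τ₁ τ₂
    _ = κ * ∑ τ₁, ∑ τ₂, d₁ τ₁ * d₂ τ₂ *
          |sigmoid (R τ₁ - R τ₂) - sigmoid (Rhat τ₁ - Rhat τ₂)| := by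
        rw [Finset.mul_sum]; exact Finset.sum_congr rfl fun τ₁ _ => (Finset.mul_sum _ _ _).symm
end
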